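/- If β ≥ (p-1)·max{μ₁, μ₂}, then the function k ↦ h₁(k) + k is strictly increasing on [0, μ₁^{-1/(p-1)}] and the function l ↦ h₂(l) + l is strictly increasing on [0, μ₂^{-1/(p-1)}]. -/

import Mathlib

open Real

/-- positivity of the auxiliary function `r ↦ (q-1) r^q - q r^(q-1) + 1` away from `r = 1`. -/
lemma phi_pos_aux {q : ℝ} (hq : 1 < q) {r : ℝ} (hr : 0 < r) (hne : r ≠ 1) :
    0 < (q - 1) * r ^ q - q * r ^ (q - 1) + 1 := by
  set φ : ℝ → ℝ := fun r => (q - 1) * r ^ q - q * r ^ (q - 1) + 1 with hφ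
  have hd : ∀ x : ℝ, 0 < x →
      HasDerivAt φ ((q - 1) * (q * x ^ (q - 1)) - q * ((q - 1) * x ^ (q - 1 - 1))) x := by
    intro x hx
    exact (((Real.hasDerivAt_rpow_const (Or.inl hx.ne')).const_mul (q - 1)).sub
      ((Real.hasDerivAt_rpow_const (Or.inl hx.ne')).const_mul q)).add_const 1
  have hcont : Continuous φ := by
    have h1 : Continuous fun x : ℝ => x ^ q :=
      Real.continuous_rpow_const (q := q) (by linarith)
    have h2 : Continuous fun x : ℝ => x ^ (q - 1) :=
      Real.continuous_rpow_const (q := q - 1) (by linarith)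
    exact ((continuous_const.mul h1).sub (continuous_const.mul h2)).add continuous_const
  have hφ1 : φ 1 = 0 := by simp [hφ, Real.one_rpow]
  rcases lt_or_gt_of_ne hne with h1 | h1
  · -- r < 1 : φ strictly decreasing on [0,1]
    have hanti : StrictAntiOn φ (Set.Icc 0 1) := by
      apply strictAntiOn_of_deriv_neg (convex_Icc 0 1) hcont.continuousOn
      intro x hx
      rw [interior_Icc] at hx
      rw [(hd x hx.1).deriv]
      have hlt : x ^ (q - 1) < x ^ (q - 1 - 1) :=
        Real.rpow_lt_rpow_of_exponent_gt hx.1 hx.2 (by linarith)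
      have hql : 0 < q * (q - 1) := by nlinarith
      nlinarith [Real.rpow_pos_of_pos hx.1 (q - 1), Real.rpow_pos_of_pos hx.1 (q - 1 - 1)]
    have := hanti ⟨hr.le, h1.le⟩ ⟨by norm_num, le_refl 1⟩ h1
    rw [hφ1] at this
    exact this
  · -- r > 1 : φ strictly increasing on [1,∞)
    have hmono : StrictMonoOn φ (Set.Ici 1) := by
      apply strictMonoOn_of_deriv_pos (convex_Ici 1) hcont.continuousOn
      intro x hx
      rw [interior_Ici] at hx
      have hx0 : (0:ℝ) < x := by linarith [Set.mem_Ioi.mp hx]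
      rw [(hd x hx0).deriv]
      have hlt : x ^ (q - 1 - 1) < x ^ (q - 1) :=
        Real.rpow_lt_rpow_of_exponent_lt hx (by linarith)
      have hql : 0 < q * (q - 1) := by nlinarith
      nlinarith [Real.rpow_pos_of_pos hx0 (q - 1), Real.rpow_pos_of_pos hx0 (q - 1 - 1)]
    have := hmono (Set.mem_Ici.mpr (le_refl 1)) (Set.mem_Ici.mpr h1.le) h1
    rw [hφ1] at this
    exact this

/-- strict Young-type inequality. -/
lemma young_lt {q a s : ℝ} (hq : 1 < q) (ha : 0 < a) (hs : 0 < s) (hne : s ≠ a) :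
    q * a * s ^ (q - 1) - (q - 1) * s ^ q < a ^ q := by
  have hr : (0:ℝ) < s / a := div_pos hs ha
  have hrne : s / a ≠ 1 := by
    intro h
    exact hne (by field_simp at h; linarith)
  have hφ := phi_pos_aux hq hr hrne
  rw [Real.div_rpow hs.le ha.le, Real.div_rpow hs.le ha.le] at hφ
  have hA : (0:ℝ) < a ^ (q - 1) := Real.rpow_pos_of_pos ha _
  have hAq : a ^ q = a ^ (q - 1) * a := by
    nth_rewrite 1 [show q = q - 1 + 1 by ring]
    rw [Real.rpow_add ha, Real.rpow_one]
  have hkey : (a ^ (q - 1) * a) *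
      ((q - 1) * (s ^ q / a ^ q) - q * (s ^ (q - 1) / a ^ (q - 1)) + 1)
      = (q - 1) * s ^ q - q * a * s ^ (q - 1) + a ^ (q - 1) * a := by
    rw [hAq]
    field_simp
  have h2 : 0 < (q - 1) * s ^ q - q * a * s ^ (q - 1) + a ^ (q - 1) * a := by
    rw [← hkey]
    exact mul_pos (mul_pos hA ha) hφ
  rw [hAq]; linarith

lemma young_le {q a s : ℝ} (hq : 1 < q) (ha : 0 < a) (hs : 0 < s) :
    q * a * s ^ (q - 1) - (q - 1) * s ^ q ≤ a ^ q := by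
  rcases eq_or_ne s a with rfl | hne
  · have hAq : s ^ q = s ^ (q - 1) * s := by
      nth_rewrite 1 [show q = q - 1 + 1 by ring]
      rw [Real.rpow_add hs, Real.rpow_one]
    exact le_of_eq (by rw [hAq]; ring)
  · exact (young_lt hq ha hs hne).le

lemma key_mono (p : ℝ) (hp1 : 1 < p) (hp2 : p < 2) (μ β : ℝ) (hμ : 0 < μ) (hβ : 0 < β)
    (hβμ : (p - 1) * μ ≤ β) :
    StrictMonoOn
      (fun k : ℝ => β ^ (-(2 / p)) * (k ^ (1 - p / 2) - μ * k ^ (p / 2)) ^ (2 / p) + k)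
      (Set.Icc 0 (μ ^ (-(1 / (p - 1))))) := by
  have hp0 : 0 < p := by linarith
  have hq1 : 1 < 2 / p := (one_lt_div hp0).2 hp2
  set K : ℝ := μ ^ (-(1 / (p - 1))) with hK_def
  have hK : 0 < K := Real.rpow_pos_of_pos hμ _
  have ha : 0 < (p - 1) * μ := mul_pos (by linarith) hμ
  set f : ℝ → ℝ := fun k : ℝ =>
    β ^ (-(2 / p)) * (k ^ (1 - p / 2) - μ * k ^ (p / 2)) ^ (2 / p) + k with hf_def
  have hβq : 0 < β ^ (2 / p) := Real.rpow_pos_of_pos hβ _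
  have hcont : Continuous f := by
    have h1 : Continuous fun x : ℝ => x ^ (1 - p / 2) :=
      Real.continuous_rpow_const (q := 1 - p / 2) (by linarith)
    have h2 : Continuous fun x : ℝ => x ^ (p / 2) :=
      Real.continuous_rpow_const (q := p / 2) (by linarith)
    have h3 : Continuous fun x : ℝ => x ^ (2 / p) :=
      Real.continuous_rpow_const (q := 2 / p) (by positivity)
    exact ((continuous_const.mul (h3.comp (h1.sub (continuous_const.mul h2))))).add continuous_id
  have ht : ∀ k : ℝ, k ∈ Set.Ioo 0 K → μ < k ^ (1 - p) := by
    intro k hk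
    have hKe : K ^ (1 - p) = μ := by
      rw [hK_def, ← Real.rpow_mul hμ.le]
      rw [show -(1 / (p - 1)) * (1 - p) = 1 by
        field_simp [show p - 1 ≠ 0 by linarith]
        ring]
      exact Real.rpow_one μ
    calc μ = K ^ (1 - p) := hKe.symm
      _ < k ^ (1 - p) := Real.rpow_lt_rpow_of_neg hk.1 hk.2 (by linarith)
  -- the derivative formula on the open interval
  have hderiv : ∀ k ∈ Set.Ioo (0:ℝ) K, HasDerivAt f
      (1 + (β ^ (2 / p))⁻¹ * ((2 / p - 1) * (k ^ (1 - p) - μ) ^ (2 / p)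
        - 2 / p * ((p - 1) * μ) * (k ^ (1 - p) - μ) ^ (2 / p - 1))) k := by
    intro k hk
    obtain ⟨hk0, hkK⟩ := hk
    have hsp : 0 < k ^ (1 - p) - μ := sub_pos.2 (ht k ⟨hk0, hkK⟩)
    set s : ℝ := k ^ (1 - p) - μ with hs_def
    have hksum : k ^ (1 - p) = s + μ := by rw [hs_def]; ring
    have hgk : k ^ (1 - p / 2) - μ * k ^ (p / 2) = k ^ (p / 2) * s := by
      rw [hs_def]
      have h : k ^ (p / 2) * k ^ (1 - p) = k ^ (1 - p / 2) := by
        rw [← Real.rpow_add hk0]; ring_nf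
      rw [← h]; ring
    have hgkpos : 0 < k ^ (1 - p / 2) - μ * k ^ (p / 2) := by
      rw [hgk]; exact mul_pos (Real.rpow_pos_of_pos hk0 _) hsp
    have hG : HasDerivAt (fun x : ℝ => x ^ (1 - p / 2) - μ * x ^ (p / 2))
        ((1 - p / 2) * k ^ (1 - p / 2 - 1) - μ * (p / 2 * k ^ (p / 2 - 1))) k :=
      (Real.hasDerivAt_rpow_const (Or.inl hk0.ne')).sub
        ((Real.hasDerivAt_rpow_const (Or.inl hk0.ne')).const_mul μ)
    have hF := (hG.rpow_const (p := 2 / p) (Or.inl hgkpos.ne')).const_mul (β ^ (-(2 / p)))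
    have hf' := hF.add (hasDerivAt_id k)
    convert hf' using 1 <;> try rfl
    have hβneg : β ^ (-(2 / p)) = (β ^ (2 / p))⁻¹ := Real.rpow_neg hβ.le _
    have A1 : k ^ (1 - p / 2 - 1) = k ^ (p / 2 - 1) * (s + μ) := by
      rw [← hksum, show (1 - p / 2 - 1) = (p / 2 - 1) + (1 - p) by ring, Real.rpow_add hk0]
    have A2 : (k ^ (1 - p / 2) - μ * k ^ (p / 2)) ^ (2 / p - 1)
        = k ^ (1 - p / 2) * s ^ (2 / p - 1) := by
      rw [hgk, Real.mul_rpow (Real.rpow_nonneg hk0.le _) hsp.le, ← Real.rpow_mul hk0.le,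
        show p / 2 * (2 / p - 1) = 1 - p / 2 by field_simp]
    have A3 : k ^ (p / 2 - 1) * k ^ (1 - p / 2) = 1 := by
      rw [← Real.rpow_add hk0, show (p / 2 - 1) + (1 - p / 2) = 0 by ring, Real.rpow_zero]
    have A5 : s ^ (2 / p) = s ^ (2 / p - 1) * s := by
      nth_rewrite 1 [show 2 / p = 2 / p - 1 + 1 by ring]
      rw [Real.rpow_add hsp, Real.rpow_one]
    rw [hβneg, A2, A1]
    have expand : ((1 - p / 2) * (k ^ (p / 2 - 1) * (s + μ)) - μ * (p / 2 * k ^ (p / 2 - 1)))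
          * (2 / p) * (k ^ (1 - p / 2) * s ^ (2 / p - 1))
        = (k ^ (p / 2 - 1) * k ^ (1 - p / 2))
          * (2 / p * s ^ (2 / p - 1) * ((1 - p / 2) * (s + μ) - μ * (p / 2))) := by ring
    rw [expand, A3, one_mul, A5]
    have hmain : (2 / p - 1) * (s ^ (2 / p - 1) * s) - 2 / p * ((p - 1) * μ) * s ^ (2 / p - 1)
        = 2 / p * s ^ (2 / p - 1) * ((1 - p / 2) * (s + μ) - μ * (p / 2)) := by
      field_simp
      ring
    rw [hmain]
    ring
  -- nonnegativity of the derivative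
  have hDnonneg : ∀ k ∈ Set.Ioo (0:ℝ) K,
      0 ≤ 1 + (β ^ (2 / p))⁻¹ * ((2 / p - 1) * (k ^ (1 - p) - μ) ^ (2 / p)
        - 2 / p * ((p - 1) * μ) * (k ^ (1 - p) - μ) ^ (2 / p - 1)) := by
    intro k hk
    have hsp : 0 < k ^ (1 - p) - μ := sub_pos.2 (ht k hk)
    have hy := young_le hq1 ha hsp
    have hb : ((p - 1) * μ) ^ (2 / p) ≤ β ^ (2 / p) :=
      Real.rpow_le_rpow ha.le hβμ (by positivity)
    have h1 : 2 / p * ((p - 1) * μ) * (k ^ (1 - p) - μ) ^ (2 / p - 1)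
        - (2 / p - 1) * (k ^ (1 - p) - μ) ^ (2 / p) ≤ β ^ (2 / p) := le_trans hy hb
    have h2 := mul_le_mul_of_nonneg_left h1 (inv_nonneg.2 hβq.le)
    rw [inv_mul_cancel₀ hβq.ne'] at h2
    have hid : (β ^ (2 / p))⁻¹ * ((2 / p - 1) * (k ^ (1 - p) - μ) ^ (2 / p)
          - 2 / p * ((p - 1) * μ) * (k ^ (1 - p) - μ) ^ (2 / p - 1))
        = -((β ^ (2 / p))⁻¹ * (2 / p * ((p - 1) * μ) * (k ^ (1 - p) - μ) ^ (2 / p - 1)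
          - (2 / p - 1) * (k ^ (1 - p) - μ) ^ (2 / p))) := by ring
    rw [hid]
    linarith
  -- where the derivative can vanish
  have hzero : ∀ k ∈ Set.Ioo (0:ℝ) K, deriv f k = 0 → k ^ (1 - p) - μ = (p - 1) * μ := by
    intro k hk h0
    by_contra hne
    have hsp : 0 < k ^ (1 - p) - μ := sub_pos.2 (ht k hk)
    have hd := (hderiv k hk).deriv
    rw [h0] at hd
    have hy := young_lt hq1 ha hsp hne
    have hb : ((p - 1) * μ) ^ (2 / p) ≤ β ^ (2 / p) :=
      Real.rpow_le_rpow ha.le hβμ (by positivity)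
    have h1 : 2 / p * ((p - 1) * μ) * (k ^ (1 - p) - μ) ^ (2 / p - 1)
        - (2 / p - 1) * (k ^ (1 - p) - μ) ^ (2 / p) < β ^ (2 / p) := lt_of_lt_of_le hy hb
    have h2 := mul_lt_mul_of_pos_left h1 (inv_pos.2 hβq)
    rw [inv_mul_cancel₀ hβq.ne'] at h2
    have hid : (β ^ (2 / p))⁻¹ * ((2 / p - 1) * (k ^ (1 - p) - μ) ^ (2 / p)
          - 2 / p * ((p - 1) * μ) * (k ^ (1 - p) - μ) ^ (2 / p - 1))
        = -((β ^ (2 / p))⁻¹ * (2 / p * ((p - 1) * μ) * (k ^ (1 - p) - μ) ^ (2 / p - 1)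
          - (2 / p - 1) * (k ^ (1 - p) - μ) ^ (2 / p))) := by ring
    rw [hid] at hd
    linarith
  -- monotonicity
  have hmono : MonotoneOn f (Set.Icc 0 K) := by
    apply monotoneOn_of_deriv_nonneg (convex_Icc 0 K) hcont.continuousOn
    · intro x hx
      rw [interior_Icc] at hx
      exact (hderiv x hx).differentiableAt.differentiableWithinAt
    · intro x hx
      rw [interior_Icc] at hx
      rw [(hderiv x hx).deriv]
      exact hDnonneg x hx
  -- strict monotonicity
  intro x hx y hy hxy
  refine lt_of_le_of_ne (hmono hx hy hxy.le) fun heq => ?_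
  have hsub : Set.Ioo x y ⊆ Set.Ioo 0 K := fun z hz =>
    ⟨lt_of_le_of_lt hx.1 hz.1, lt_of_lt_of_le hz.2 hy.2⟩
  have hmem : ∀ z ∈ Set.Ioo x y, z ∈ Set.Icc 0 K := fun z hz =>
    ⟨hx.1.trans hz.1.le, hz.2.le.trans hy.2⟩
  have hconst : ∀ z ∈ Set.Ioo x y, f z = f x := fun z hz =>
    le_antisymm (heq ▸ hmono (hmem z hz) hy hz.2.le) (hmono hx (hmem z hz) hz.1.le)
  have hder0 : ∀ z ∈ Set.Ioo x y, deriv f z = 0 := by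
    intro z hz
    have hev : f =ᶠ[nhds z] fun _ => f x :=
      Filter.eventuallyEq_of_mem (Ioo_mem_nhds hz.1 hz.2) fun w hw => hconst w hw
    rw [hev.deriv_eq]
    exact deriv_const z (f x)
  have hz1 : (2 * x + y) / 3 ∈ Set.Ioo x y := ⟨by linarith, by linarith⟩
  have hz2 : (x + 2 * y) / 3 ∈ Set.Ioo x y := ⟨by linarith, by linarith⟩
  have h1 := hzero _ (hsub hz1) (hder0 _ hz1)
  have h2 := hzero _ (hsub hz2) (hder0 _ hz2)
  have hlt : (2 * x + y) / 3 < (x + 2 * y) / 3 := by linarith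
  have hcmp := Real.rpow_lt_rpow_of_neg (hsub hz1).1 hlt (show 1 - p < 0 by linarith)
  linarith

theorem stmt_2 (N : ℕ) (hN : 5 ≤ N) (p : ℝ) (hp : p = (N : ℝ) / ((N : ℝ) - 2))
    (μ₁ μ₂ β : ℝ) (hμ₁ : 0 < μ₁) (hμ₂ : 0 < μ₂) (hβ : 0 < β)
    (hβ' : (p - 1) * max μ₁ μ₂ ≤ β) :
    StrictMonoOn
      (fun k : ℝ => β ^ (-(2 / p)) * (k ^ (1 - p / 2) - μ₁ * k ^ (p / 2)) ^ (2 / p) + k)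
      (Set.Icc 0 (μ₁ ^ (-(1 / (p - 1))))) ∧
    StrictMonoOn
      (fun l : ℝ => β ^ (-(2 / p)) * (l ^ (1 - p / 2) - μ₂ * l ^ (p / 2)) ^ (2 / p) + l)
      (Set.Icc 0 (μ₂ ^ (-(1 / (p - 1))))) := by
  have hN5 : (5:ℝ) ≤ (N:ℝ) := by exact_mod_cast hN
  have hN2 : (0:ℝ) < (N:ℝ) - 2 := by linarith
  have hp1 : 1 < p := by
    rw [hp, lt_div_iff₀ hN2]; linarith
  have hp2 : p < 2 := by
    rw [hp, div_lt_iff₀ hN2]; linarith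
  have h1 : (p - 1) * μ₁ ≤ β :=
    le_trans (mul_le_mul_of_nonneg_left (le_max_left μ₁ μ₂) (by linarith)) hβ'
  have h2 : (p - 1) * μ₂ ≤ β :=
    le_trans (mul_le_mul_of_nonneg_left (le_max_right μ₁ μ₂) (by linarith)) hβ'
  exact ⟨key_mono p hp1 hp2 μ₁ β hμ₁ hβ h1, key_mono p hp1 hp2 μ₂ β hμ₂ hβ h2⟩
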